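/- arXiv:2203.12689 — 2 statements merged into one kernel-verified Lean document; each statement's English description precedes it below -/
import Mathlib

section
/- Let Y be an integrable random variable and α ∈ (0,1). Then the conditional value-at-risk CVaR_α(Y) := inf_{τ∈ℝ} (τ + (1/α)·E[max(Y-τ, 0)]) is attained at τ = v_α(Y) := inf{z : P(Y ≤ z) ≥ 1-α}, i.e., CVaR_α(Y) = v_α(Y) + (1/α)·E[max(Y - v_α(Y), 0)]. -/
open MeasureTheory Set Filter Topology
open scoped ENNReal NNReal

noncomputable def phi (γ z : ℝ) : ℝ := if γ = 0 then Real.exp (-z) else (1 + γ * z) ^ (-1/γ)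

def Jgamma (γ : ℝ) : Set ℝ := if γ < 0 then Set.Ico 0 (-1/γ) else Set.Ici 0

noncomputable def Ftheta (k m : ℕ) (γ s g z : ℝ) : ℝ :=
  if z < s then 0
  else if γ < 0 ∧ s - g/γ ≤ z then 1
  else 1 - ((k : ℝ)/m) * phi γ ((z - s)/g)

def Itheta (γ s g : ℝ) : Set ℝ := if γ < 0 then Set.Ico s (s - g/γ) else Set.Ici s

private lemma cvar_aux {Ω : Type*} [MeasurableSpace Ω] (P : Measure Ω) [IsProbabilityMeasure P]
    (Y : Ω → ℝ) (hmeas : Measurable Y) (hY : Integrable Y P) (α : ℝ)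
    (hα : α ∈ Set.Ioo (0:ℝ) 1)
    (v : ℝ) (hv : v = sInf {z : ℝ | 1 - α ≤ (P {ω | Y ω ≤ z}).toReal}) :
    (⨅ τ : ℝ, (τ + (1/α) * ∫ ω, max (Y ω - τ) 0 ∂P))
      = v + (1/α) * ∫ ω, max (Y ω - v) 0 ∂P := by
  obtain ⟨hα0, hα1⟩ := hα
  set F : ℝ → ℝ := fun z => (P {ω | Y ω ≤ z}).toReal with hF
  set S : Set ℝ := {z : ℝ | 1 - α ≤ F z} with hS
  have hmz : ∀ z : ℝ, MeasurableSet {ω | Y ω ≤ z} := fun z => hmeas measurableSet_Iic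
  have hmz' : ∀ z : ℝ, MeasurableSet {ω | z < Y ω} := fun z => hmeas measurableSet_Ioi
  have hF_mono : Monotone F := fun a b hab =>
    ENNReal.toReal_mono (measure_ne_top _ _) (measure_mono (fun ω h => le_trans h hab))
  have hint : ∀ c : ℝ, Integrable (fun ω => max (Y ω - c) 0) P := fun c =>
    (hY.sub (integrable_const c)).pos_part
  -- S is nonempty
  have hS_ne : S.Nonempty := by
    have hU : (⋃ n : ℕ, {ω | Y ω ≤ (n : ℝ)}) = univ :=
      eq_univ_of_forall fun ω => mem_iUnion.2 ((exists_nat_ge (Y ω)).imp fun n hn => hn)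
    have h1 : Tendsto (fun n : ℕ => P {ω | Y ω ≤ (n : ℝ)}) atTop (𝓝 1) := by
      have := tendsto_measure_iUnion_atTop (μ := P)
        (s := fun n : ℕ => {ω | Y ω ≤ (n : ℝ)})
        (by intro a b hab ω h
            simp only [mem_setOf_eq] at h ⊢
            exact le_trans h (by exact_mod_cast hab))
      rw [hU] at this
      simpa [Function.comp_def] using this
    have hlt : ENNReal.ofReal (1 - α) < 1 := ENNReal.ofReal_lt_one.2 (by linarith)
    obtain ⟨n, hn⟩ := (h1.eventually (lt_mem_nhds hlt)).exists
    exact ⟨n, (ENNReal.ofReal_le_iff_le_toReal (measure_ne_top _ _)).1 hn.le⟩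
  -- S is bounded below
  have hbdd : BddBelow S := by
    have hI : (⋂ n : ℕ, {ω | Y ω ≤ -(n : ℝ)}) = ∅ := by
      ext ω
      simp only [mem_iInter, mem_setOf_eq, mem_empty_iff_false, iff_false, not_forall]
      obtain ⟨n, hn⟩ := exists_nat_gt (-(Y ω))
      exact ⟨n, by push_neg; linarith⟩
    have h2 : Tendsto (fun n : ℕ => P {ω | Y ω ≤ -(n : ℝ)}) atTop (𝓝 0) := by
      have := tendsto_measure_iInter_atTop (μ := P)
        (s := fun n : ℕ => {ω | Y ω ≤ -(n : ℝ)})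
        (fun n => (hmz _).nullMeasurableSet)
        (by intro a b hab ω h
            simp only [mem_setOf_eq] at h ⊢
            have : (a:ℝ) ≤ b := by exact_mod_cast hab
            linarith)
        ⟨0, measure_ne_top _ _⟩
      rw [hI] at this
      simpa [Function.comp_def] using this
    have hpos : (0 : ℝ≥0∞) < ENNReal.ofReal (1 - α) := ENNReal.ofReal_pos.2 (by linarith)
    obtain ⟨n, hn⟩ := (h2.eventually (gt_mem_nhds hpos)).exists
    refine ⟨-(n : ℝ), fun z hz => ?_⟩
    by_contra h
    push_neg at h
    have h3 : F z ≤ F (-(n : ℝ)) := hF_mono h.le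
    have h4 : F (-(n : ℝ)) < 1 - α := by
      have := ENNReal.toReal_lt_of_lt_ofReal hn
      exact this
    exact absurd hz (by simp only [hS, mem_setOf_eq]; push_neg; linarith)
  -- F v ≥ 1 - α
  have hgtv : ∀ w, v < w → 1 - α ≤ F w := by
    intro w hw
    obtain ⟨z, hzS, hzw⟩ := exists_lt_of_csInf_lt hS_ne (hv ▸ hw)
    exact le_trans hzS (hF_mono hzw.le)
  have hFv : 1 - α ≤ F v := by
    have hmem : ∀ n : ℕ, ENNReal.ofReal (1 - α) ≤ P {ω | Y ω ≤ v + 1/(n+1)} := by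
      intro n
      refine (ENNReal.ofReal_le_iff_le_toReal (measure_ne_top _ _)).2 ?_
      refine hgtv _ ?_
      have : (0:ℝ) < 1/((n:ℝ)+1) := by positivity
      linarith
    have hIv : (⋂ n : ℕ, {ω | Y ω ≤ v + 1/(n+1)}) = {ω | Y ω ≤ v} := by
      ext ω
      simp only [mem_iInter, mem_setOf_eq]
      constructor
      · intro h
        by_contra hc
        push_neg at hc
        obtain ⟨n, hn⟩ := exists_nat_one_div_lt (ε := Y ω - v) (by linarith)
        exact absurd (h n) (by linarith)
      · intro h n
        have : (0:ℝ) < 1/(n+1) := by positivity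
        linarith
    have h3 : Tendsto (fun n : ℕ => P {ω | Y ω ≤ v + 1/(n+1)}) atTop (𝓝 (P {ω | Y ω ≤ v})) := by
      have := tendsto_measure_iInter_atTop (μ := P)
        (s := fun n : ℕ => {ω | Y ω ≤ v + 1/(n+1)})
        (fun n => (hmz _).nullMeasurableSet)
        (by intro a b hab ω h
            have h' : Y ω ≤ v + 1/((b:ℝ)+1) := h
            show Y ω ≤ v + 1/((a:ℝ)+1)
            have hc : (a:ℝ) ≤ b := by exact_mod_cast hab
            have h2 : (1:ℝ)/(b+1) ≤ 1/(a+1) := by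
              apply one_div_le_one_div_of_le (by positivity)
              linarith
            linarith)
        ⟨0, measure_ne_top _ _⟩
      rw [hIv] at this
      exact this
    have h4 : ENNReal.ofReal (1 - α) ≤ P {ω | Y ω ≤ v} := ge_of_tendsto' h3 hmem
    exact (ENNReal.ofReal_le_iff_le_toReal (measure_ne_top _ _)).1 h4
  -- F t < 1 - α for t < v
  have hltv : ∀ t, t < v → F t < 1 - α := by
    intro t ht
    by_contra h
    push_neg at h
    have : v ≤ t := hv ▸ csInf_le hbdd h
    linarith
  -- complement formula
  have hcompl : ∀ t : ℝ, (P {ω | t < Y ω}).toReal = 1 - F t := by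
    intro t
    have h1 : {ω | t < Y ω} = {ω | Y ω ≤ t}ᶜ := by ext ω; simp [not_le]
    rw [h1, measure_compl (hmz t) (measure_ne_top _ _), measure_univ,
      ENNReal.toReal_sub_of_le prob_le_one ENNReal.one_ne_top]
    simp [hF]
  -- main inequality: v is a minimizer
  have hvlow : ∀ τ : ℝ, v + (1/α) * ∫ ω, max (Y ω - v) 0 ∂P
      ≤ τ + (1/α) * ∫ ω, max (Y ω - τ) 0 ∂P := by
    intro τ
    set Iv := ∫ ω, max (Y ω - v) 0 ∂P with hIvdef
    set Iτ := ∫ ω, max (Y ω - τ) 0 ∂P with hIτdef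
    rcases le_or_gt v τ with hτ | hτ
    · -- case v ≤ τ
      set p := (P {ω | v < Y ω}).toReal with hpdef
      have hp : p ≤ α := by rw [hpdef, hcompl]; linarith [hFv]
      have hp0 : 0 ≤ p := ENNReal.toReal_nonneg
      have key : Iv - Iτ ≤ p * (τ - v) := by
        have hineq : (fun ω => max (Y ω - v) 0 - max (Y ω - τ) 0)
            ≤ fun ω => ({ω | v < Y ω}).indicator (fun _ => τ - v) ω := by
          intro ω
          show max (Y ω - v) 0 - max (Y ω - τ) 0 ≤ ({ω : Ω | v < Y ω}).indicator (fun _ => τ - v) ω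
          by_cases h : v < Y ω
          · rw [indicator_of_mem (show ω ∈ {ω : Ω | v < Y ω} from h)]
            have h1 : max (Y ω - v) 0 = Y ω - v := max_eq_left (by linarith)
            have h2 : Y ω - τ ≤ max (Y ω - τ) 0 := le_max_left _ _
            linarith
          · rw [indicator_of_notMem (show ω ∉ {ω : Ω | v < Y ω} from h)]
            push_neg at h
            have h1 : max (Y ω - v) 0 = 0 := max_eq_right (by linarith)
            have h2 : (0:ℝ) ≤ max (Y ω - τ) 0 := le_max_right _ _
            linarith
        have h3 := integral_mono
          (((hint v).sub (hint τ)) :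
            Integrable (fun ω => max (Y ω - v) 0 - max (Y ω - τ) 0) P)
          ((integrable_const (τ - v)).indicator (hmz' v)) hineq
        simp only [Pi.sub_apply] at h3
        rw [integral_sub (hint v) (hint τ), integral_indicator_const _ (hmz' v)] at h3
        simpa [smul_eq_mul, hpdef, measureReal_def] using h3
      have h5 : (1/α) * (Iv - Iτ) ≤ (1/α) * (p * (τ - v)) :=
        mul_le_mul_of_nonneg_left key (by positivity)
      have h6 : p * (τ - v) ≤ α * (τ - v) :=
        mul_le_mul_of_nonneg_right hp (by linarith)
      have h7 : (1/α) * (α * (τ - v)) = τ - v := by field_simp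
      have h8 : (1/α) * (p * (τ - v)) ≤ (1/α) * (α * (τ - v)) :=
        mul_le_mul_of_nonneg_left h6 (by positivity)
      nlinarith [h5, h7, h8]
    · -- case τ < v
      refine le_of_forall_pos_le_add ?_
      intro ε hε
      set t := max τ (v - ε) with htdef
      have ht1 : τ ≤ t := le_max_left _ _
      have ht2 : t < v := max_lt hτ (by linarith)
      have ht3 : v - ε ≤ t := le_max_right _ _
      set q := (P {ω | t < Y ω}).toReal with hqdef
      have hq : α ≤ q := by rw [hqdef, hcompl]; linarith [hltv t ht2]
      have key : Iv + (t - τ) * q ≤ Iτ := by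
        have hineq : (fun ω => max (Y ω - v) 0 + ({ω | t < Y ω}).indicator (fun _ => t - τ) ω)
            ≤ fun ω => max (Y ω - τ) 0 := by
          intro ω
          show max (Y ω - v) 0 + ({ω : Ω | t < Y ω}).indicator (fun _ => t - τ) ω ≤ max (Y ω - τ) 0
          by_cases h : t < Y ω
          · rw [indicator_of_mem (show ω ∈ {ω : Ω | t < Y ω} from h)]
            have h4 : max (Y ω - τ) 0 = Y ω - τ := max_eq_left (by linarith)
            rcases le_or_gt (Y ω) v with h5 | h5
            · have h6 : max (Y ω - v) 0 = 0 := max_eq_right (by linarith)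
              linarith
            · have h6 : max (Y ω - v) 0 = Y ω - v := max_eq_left (by linarith)
              linarith
          · rw [indicator_of_notMem (show ω ∉ {ω : Ω | t < Y ω} from h)]
            push_neg at h
            have h6 : max (Y ω - v) 0 = 0 := max_eq_right (by linarith)
            simp only [h6, add_zero]
            exact le_max_right _ _
        have h3 := integral_mono
          (((hint v).add ((integrable_const (t - τ)).indicator (hmz' t))) :
            Integrable (fun ω => max (Y ω - v) 0 + ({ω | t < Y ω}).indicator (fun _ => t - τ) ω) P)
          (hint τ) hineq
        simp only [Pi.add_apply] at h3
        rw [integral_add (hint v) ((integrable_const (t - τ)).indicator (hmz' t)),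
          integral_indicator_const _ (hmz' t)] at h3
        have : Iv + (P {ω | t < Y ω}).toReal * (t - τ) ≤ Iτ := by
          simpa [smul_eq_mul, measureReal_def] using h3
        nlinarith [this]
      have h5 : (1/α) * (Iv + (t - τ) * q) ≤ (1/α) * Iτ :=
        mul_le_mul_of_nonneg_left key (by positivity)
      have h6 : (t - τ) ≤ (1/α) * ((t - τ) * q) := by
        have h7 : (t - τ) * α ≤ (t - τ) * q := mul_le_mul_of_nonneg_left hq (by linarith)
        have h8 : (1/α) * ((t - τ) * α) = t - τ := by field_simp
        nlinarith [mul_le_mul_of_nonneg_left h7 (le_of_lt (show (0:ℝ) < 1/α by positivity))]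
      have h9 : (1/α) * (Iv + (t - τ) * q) = (1/α) * Iv + (1/α) * ((t - τ) * q) := by ring
      linarith
  refine le_antisymm ?_ (le_ciInf hvlow)
  refine ciInf_le ⟨v + (1/α) * ∫ ω, max (Y ω - v) 0 ∂P, ?_⟩ v
  rintro x ⟨τ, rfl⟩
  exact hvlow τ

theorem stmt11 {Ω : Type*} [MeasurableSpace Ω] (P : Measure Ω) [IsProbabilityMeasure P]
    (Y : Ω → ℝ) (hY : Integrable Y P) (α : ℝ) (hα : α ∈ Set.Ioo (0:ℝ) 1)
    (v : ℝ) (hv : v = sInf {z : ℝ | 1 - α ≤ (P {ω | Y ω ≤ z}).toReal}) :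
    (⨅ τ : ℝ, (τ + (1/α) * ∫ ω, max (Y ω - τ) 0 ∂P))
      = v + (1/α) * ∫ ω, max (Y ω - v) 0 ∂P := by
  have hae := hY.1.aemeasurable
  set Y' : Ω → ℝ := hae.mk Y with hY'def
  have hY'm : Measurable Y' := hae.measurable_mk
  have hYY' : Y =ᵐ[P] Y' := hae.ae_eq_mk
  have hsets : ∀ z : ℝ, P {ω | Y ω ≤ z} = P {ω | Y' ω ≤ z} := fun z =>
    measure_congr (hYY'.mono fun ω h => by
      show (Y ω ≤ z) = (Y' ω ≤ z)
      rw [h])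
  have hints : ∀ c : ℝ, (∫ ω, max (Y ω - c) 0 ∂P) = ∫ ω, max (Y' ω - c) 0 ∂P := fun c =>
    integral_congr_ae (hYY'.mono fun ω h => by
      show max (Y ω - c) 0 = max (Y' ω - c) 0
      rw [h])
  have hv' : v = sInf {z : ℝ | 1 - α ≤ (P {ω | Y' ω ≤ z}).toReal} := by
    rw [hv]
    congr 1
    ext z
    simp only [Set.mem_setOf_eq]
    rw [hsets z]
  have h1 : (⨅ τ : ℝ, (τ + (1/α) * ∫ ω, max (Y ω - τ) 0 ∂P))
      = ⨅ τ : ℝ, (τ + (1/α) * ∫ ω, max (Y' ω - τ) 0 ∂P) :=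
    iInf_congr fun τ => by rw [hints]
  rw [h1, hints]
  exact cvar_aux P Y' hY'm (hY.congr hYY') α hα v hv'
end

section
/- Let γ < 1 and 0 < α < k/m. The conditional value-at-risk of Y_θ, expressed as CVaR_α(Y_θ) = (1/α)·∫_{1-α}^1 v_{1-τ}(Y_θ) dτ, admits the closed form CVaR_α(Y_θ) = (v_α(Y_θ) + g_s - γ·s)/(1-γ), where v_α(Y_θ) = s + (g_s/γ)·((mα/k)^(-γ) - 1) for γ ≠ 0 and s - g_s·log(mα/k) for γ = 0. -/
open MeasureTheory Set Filter Topology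

lemma my_intlog (α : ℝ) (h0 : 0 < α) (h1 : α ≤ 1) :
    IntervalIntegrable Real.log volume 0 α := by
  have hmaj : IntervalIntegrable (fun x : ℝ => 2 * x ^ (-1/2 : ℝ)) volume 0 α :=
    (intervalIntegral.intervalIntegrable_rpow' (by norm_num)).const_mul 2
  refine hmaj.mono_fun Real.measurable_log.aestronglyMeasurable ?_
  have : Set.uIoc (0:ℝ) α = Set.Ioc 0 α := Set.uIoc_of_le h0.le
  rw [this, Filter.EventuallyLE, MeasureTheory.ae_restrict_iff' measurableSet_Ioc]
  filter_upwards with x hx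
  obtain ⟨hx0, hxα⟩ := hx
  have hlogle : Real.log x ≤ 0 := Real.log_nonpos hx0.le (hxα.trans h1)
  have hb : -Real.log x ≤ 2 * x ^ (-1/2 : ℝ) := by
    have := Real.log_le_rpow_div (x := x⁻¹) (by positivity) (by norm_num : (0:ℝ) < 1/2)
    rw [Real.log_inv, Real.inv_rpow hx0.le] at this
    rw [← Real.rpow_neg hx0.le] at this
    calc -Real.log x ≤ x ^ (-(1/2) : ℝ) / (1/2) := this
      _ = 2 * x ^ (-1/2 : ℝ) := by rw [neg_div]; ring
  have hgpos : (0:ℝ) ≤ 2 * x ^ (-1/2 : ℝ) := by positivity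
  simp only [Real.norm_eq_abs]
  rw [abs_of_nonpos hlogle, abs_of_nonneg hgpos]
  exact hb

lemma my_integral_log (α : ℝ) (h0 : 0 < α) (h1 : α ≤ 1) :
    ∫ x in (0:ℝ)..α, Real.log x = α * Real.log α - α := by
  have := intervalIntegral.integral_eq_sub_of_hasDeriv_right_of_le h0.le
    (f := fun x => x * Real.log x - x) (f' := Real.log)
    (by exact (Real.continuous_mul_log.sub continuous_id).continuousOn)
    (fun x hx => by
      have h := (Real.hasDerivAt_mul_log (ne_of_gt hx.1)).sub (hasDerivAt_id x)
      simpa [Pi.sub_def] using h.hasDerivWithinAt)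
    (my_intlog α h0 h1)
  simpa using this

noncomputable def vf (k m : ℕ) (γ s g β : ℝ) : ℝ :=
  if γ = 0 then s - g * Real.log (m * β / k)
  else s + (g / γ) * ((m * β / k) ^ (-γ) - 1)

set_option maxHeartbeats 1000000 in
lemma my_setEq (k m : ℕ) (γ s g β : ℝ) (hk : 0 < k) (hkm : k < m) (hγ : γ < 1)
    (hg : 0 < g) (hβ0 : 0 < β) (hβ : β < (k:ℝ)/m) :
    {z : ℝ | 1 - β ≤ Ftheta k m γ s g z} = Set.Ici (vf k m γ s g β) := by
  have hk0 : (0:ℝ) < k := by exact_mod_cast hk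
  have hm0 : (0:ℝ) < m := by exact_mod_cast hk.trans hkm
  set c : ℝ := ↑m * β / ↑k with hc
  have hc0 : 0 < c := by positivity
  have hc1 : c < 1 := by
    rw [hc, div_lt_one hk0]
    calc (m:ℝ) * β < m * ((k:ℝ)/m) := by exact mul_lt_mul_of_pos_left hβ hm0
      _ = k := by field_simp
  have hβ1 : β < 1 := hβ.trans (by rw [div_lt_one hm0]; exact_mod_cast hkm)
  set Z : ℝ := vf k m γ s g β with hZ
  have hcp : 0 < c ^ (-γ) := Real.rpow_pos_of_pos hc0 _
  have hsZ : s < Z := by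
    rw [hZ, vf, ← hc]
    rcases lt_trichotomy γ 0 with h | h | h
    · rw [if_neg (ne_of_lt h)]
      have h1 : c ^ (-γ) < 1 := Real.rpow_lt_one hc0.le hc1 (by linarith)
      have h2 : g / γ < 0 := div_neg_of_pos_of_neg hg h
      nlinarith
    · rw [if_pos h]
      have := Real.log_neg hc0 hc1
      nlinarith
    · rw [if_neg (ne_of_gt h)]
      have h1 : 1 < c ^ (-γ) := by
        rw [Real.one_lt_rpow_iff_of_pos hc0]
        right; exact ⟨hc1, by linarith⟩
      have h2 : 0 < g / γ := div_pos hg h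
      nlinarith
  clear_value c Z
  ext z
  simp only [Set.mem_setOf_eq, Set.mem_Ici]
  by_cases h1 : z < s
  · rw [Ftheta, if_pos h1]
    constructor
    · intro h; linarith
    · intro h; linarith
  · push_neg at h1
    by_cases h2 : γ < 0 ∧ s - g/γ ≤ z
    · rw [Ftheta, if_neg (not_lt.mpr h1), if_pos h2]
      have hZlt : Z < s - g/γ := by
        rw [hZ, vf, if_neg (ne_of_lt h2.1), ← hc]
        have h2' : g / γ < 0 := div_neg_of_pos_of_neg hg h2.1
        nlinarith
      constructor
      · intro _; linarith [h2.2]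
      · intro _; linarith
    · rw [Ftheta, if_neg (not_lt.mpr h1), if_neg h2]
      set u : ℝ := (z - s) / g with hu
      have hu0 : 0 ≤ u := div_nonneg (by linarith) hg.le
      have hzu : z = s + g * u := by rw [hu]; field_simp; ring
      clear_value u
      have key : (1 - β ≤ 1 - (k:ℝ)/m * phi γ u) ↔ phi γ u ≤ c := by
        have hq : (0:ℝ) < (k:ℝ)/m := by positivity
        have hcalc : β / ((k:ℝ)/m) = c := by rw [hc]; field_simp
        constructor
        · intro h
          have h' : ((k:ℝ)/m) * phi γ u ≤ β := by linarith
          rw [mul_comm, ← le_div_iff₀ hq, hcalc] at h'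
          exact h'
        · intro h
          have h' : ((k:ℝ)/m) * phi γ u ≤ β := by
            rw [mul_comm, ← le_div_iff₀ hq, hcalc]
            exact h
          linarith
      rw [key]
      rcases eq_or_ne γ 0 with hγ0 | hγ0
      · subst hγ0
        rw [phi, if_pos rfl, hZ, vf, if_pos rfl, ← hc, hzu]
        have hiff : Real.exp (-u) ≤ c ↔ -u ≤ Real.log c := by
          rw [← Real.log_le_log_iff (Real.exp_pos _) hc0, Real.log_exp]
        rw [hiff]
        constructor
        · intro h
          have h' := mul_le_mul_of_nonneg_left h hg.le
          nlinarith
        · intro h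
          have h' : g * (-u) ≤ g * Real.log c := by nlinarith
          have := le_of_mul_le_mul_left (by linarith : g * (-u) ≤ g * Real.log c) hg
          linarith
      · rw [phi, if_neg hγ0, hZ, vf, if_neg hγ0, ← hc]
        have hpos : 0 < 1 + γ * u := by
          rcases lt_or_gt_of_ne hγ0 with hneg | hpos'
          · have hzlt : z < s - g/γ := by
              by_contra hcon
              push_neg at hcon
              exact h2 ⟨hneg, hcon⟩
            have h' : z - s < -(g/γ) := by linarith
            have h'' : γ * (-(g/γ)) < γ * (z - s) := mul_lt_mul_of_neg_left h' hneg
            have h3 : γ * (-(g/γ)) = -g := by field_simp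
            have h4 : -g < γ * (z - s) := by linarith
            have h5 : 1 + γ * u = (g + γ * (z - s)) / g := by rw [hu]; field_simp
            rw [h5]
            apply div_pos (by linarith) hg
          · nlinarith
        have hap : 0 < (1 + γ * u) ^ (-1/γ) := Real.rpow_pos_of_pos hpos _
        have hexpid : ((1 + γ * u) ^ (-1/γ)) ^ (-γ) = 1 + γ * u := by
          rw [← Real.rpow_mul hpos.le]
          have : (-1/γ) * (-γ) = 1 := by field_simp
          rw [this, Real.rpow_one]
        rw [hzu]
        set X : ℝ := c ^ (-γ) with hX
        clear_value X
        rcases lt_or_gt_of_ne hγ0 with hneg | hpos'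
        · rw [← Real.rpow_le_rpow_iff hap.le hc0.le (show (0:ℝ) < -γ by linarith),
            hexpid, ← hX]
          have hgγ : g/γ < 0 := div_neg_of_pos_of_neg hg hneg
          have hγg : γ/g < 0 := div_neg_of_neg_of_pos hneg hg
          constructor
          · intro h
            have h' : γ * u ≤ X - 1 := by linarith
            have h2' := mul_le_mul_of_nonpos_left h' hgγ.le
            have e1 : g/γ * (γ * u) = g * u := by field_simp
            rw [e1] at h2'
            linarith
          · intro h
            have h' : g/γ * (X - 1) ≤ g * u := by linarith
            have h2' := mul_le_mul_of_nonpos_left h' hγg.le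
            have e1 : γ/g * (g * u) = γ * u := by field_simp
            have e2 : γ/g * (g/γ * (X - 1)) = X - 1 := by field_simp
            rw [e1, e2] at h2'
            linarith
        · rw [← Real.rpow_le_rpow_iff_of_neg hc0 hap (show -γ < 0 by linarith),
            hexpid, ← hX]
          have hgγ : 0 < g/γ := div_pos hg hpos'
          have hγg : 0 < γ/g := div_pos hpos' hg
          constructor
          · intro h
            have h' : X - 1 ≤ γ * u := by linarith
            have h2' := mul_le_mul_of_nonneg_left h' hgγ.le
            have e1 : g/γ * (γ * u) = g * u := by field_simp
            rw [e1] at h2'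
            linarith
          · intro h
            have h' : g/γ * (X - 1) ≤ g * u := by linarith
            have h2' := mul_le_mul_of_nonneg_left h' hγg.le
            have e1 : γ/g * (g * u) = γ * u := by field_simp
            have e2 : γ/g * (g/γ * (X - 1)) = X - 1 := by field_simp
            rw [e1, e2] at h2'
            linarith


theorem stmt13 (k m : ℕ) (γ s g α : ℝ) (hk : 0 < k) (hkm : k < m) (hγ : γ < 1)
    (hg : 0 < g) (hα : 0 < α) (hαkm : α < (k : ℝ) / m)
    (v : ℝ → ℝ) (hv : ∀ β ∈ Set.Ioo (0:ℝ) 1, v β = sInf {z : ℝ | 1 - β ≤ Ftheta k m γ s g z}) :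
    (1/α) * ∫ τ in Set.Ioc (1 - α) 1, v (1 - τ)
      = (v α + g - γ * s) / (1 - γ) ∧
    v α = (if γ = 0 then s - g * Real.log (m * α / k)
           else s + (g / γ) * ((m * α / k) ^ (-γ) - 1)) := by
  have hk0 : (0:ℝ) < k := by exact_mod_cast hk
  have hm0 : (0:ℝ) < m := by exact_mod_cast hk.trans hkm
  have hkm1 : (k:ℝ)/m < 1 := by rw [div_lt_one hm0]; exact_mod_cast hkm
  have hα1 : α < 1 := hαkm.trans hkm1
  have hvf : ∀ β, 0 < β → β < (k:ℝ)/m → v β = vf k m γ s g β := by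
    intro β h0 hb
    rw [hv β ⟨h0, hb.trans hkm1⟩, my_setEq k m γ s g β hk hkm hγ hg h0 hb, csInf_Ici]
  have hvα := hvf α hα hαkm
  refine ⟨?_, by rw [hvα]; rfl⟩
  have e0 : ∫ τ in Set.Ioc (1-α) 1, v (1-τ) = ∫ τ in (1-α)..1, v (1-τ) :=
    (intervalIntegral.integral_of_le (by linarith)).symm
  have e1 : ∫ τ in (1-α)..1, v (1-τ) = ∫ β in (0:ℝ)..α, v β := by
    have h := intervalIntegral.integral_comp_sub_left (a := 1-α) (b := 1) v 1
    simpa using h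
  have e2 : ∫ β in (0:ℝ)..α, v β = ∫ β in (0:ℝ)..α, vf k m γ s g β := by
    rw [intervalIntegral.integral_of_le hα.le, intervalIntegral.integral_of_le hα.le]
    apply MeasureTheory.setIntegral_congr_fun measurableSet_Ioc
    intro β hβm
    exact hvf β hβm.1 (lt_of_le_of_lt hβm.2 hαkm)
  rw [e0, e1, e2, hvα]
  rcases eq_or_ne γ 0 with hγ0 | hγ0
  · subst hγ0
    have e3 : ∫ β in (0:ℝ)..α, vf k m 0 s g β
        = ∫ β in (0:ℝ)..α, ((s - g * Real.log ((m:ℝ)/k)) - g * Real.log β) := by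
      rw [intervalIntegral.integral_of_le hα.le, intervalIntegral.integral_of_le hα.le]
      apply MeasureTheory.setIntegral_congr_fun measurableSet_Ioc
      intro β hβm
      have hβ0 : 0 < β := hβm.1
      rw [vf, if_pos rfl,
        show (m:ℝ) * β / k = ((m:ℝ)/k) * β by ring,
        Real.log_mul (by positivity) (ne_of_gt hβ0)]
      ring
    rw [e3, intervalIntegral.integral_sub intervalIntegrable_const
        ((my_intlog α hα hα1.le).const_mul g),
      intervalIntegral.integral_const, intervalIntegral.integral_const_mul,
      my_integral_log α hα hα1.le, vf, if_pos rfl,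
      show (m:ℝ) * α / k = ((m:ℝ)/k) * α by ring,
      Real.log_mul (by positivity) (ne_of_gt hα)]
    rw [smul_eq_mul]
    field_simp
    ring
  · have hγ1 : (0:ℝ) < 1 - γ := by linarith
    have hint : IntervalIntegrable (fun x : ℝ => x ^ (-γ)) volume 0 α :=
      intervalIntegral.intervalIntegrable_rpow' (by linarith)
    have e3 : ∫ β in (0:ℝ)..α, vf k m γ s g β
        = ∫ β in (0:ℝ)..α, ((s - g/γ) + ((g/γ) * ((m:ℝ)/k) ^ (-γ)) * β ^ (-γ)) := by
      rw [intervalIntegral.integral_of_le hα.le, intervalIntegral.integral_of_le hα.le]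
      apply MeasureTheory.setIntegral_congr_fun measurableSet_Ioc
      intro β hβm
      have hβ0 : 0 < β := hβm.1
      rw [vf, if_neg hγ0,
        show (m:ℝ) * β / k = ((m:ℝ)/k) * β by ring,
        Real.mul_rpow (by positivity) hβ0.le]
      ring
    rw [e3, intervalIntegral.integral_add intervalIntegrable_const (hint.const_mul _),
      intervalIntegral.integral_const, intervalIntegral.integral_const_mul,
      integral_rpow (Or.inl (by linarith : (-1:ℝ) < -γ)),
      Real.zero_rpow (by intro hcon; linarith [hcon] : -γ + 1 ≠ 0)]
    rw [vf, if_neg hγ0,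
      show (m:ℝ) * α / k = ((m:ℝ)/k) * α by ring,
      Real.mul_rpow (by positivity) hα.le]
    have hαpow : α ^ (-γ + 1) = α ^ (-γ) * α := by
      rw [Real.rpow_add hα, Real.rpow_one]
    rw [hαpow, smul_eq_mul]
    generalize ((m:ℝ)/k) ^ (-γ) = P
    generalize α ^ (-γ) = Q
    have hγ1' : (1:ℝ) - γ ≠ 0 := ne_of_gt hγ1
    have h1 : -γ + 1 ≠ 0 := by intro hcon; linarith
    field_simp
    ring
end
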